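/- Suppose (v_k)_{k≥0} is a sequence of nonnegative reals with v_0 ≤ 1/4, v_1 ≤ 1/8, v_2 ≤ 1/16, and for every k ≥ 3, v_k ≤ Σ_{j=1}^{k-1} j · (4(k^2-3)/((k-2)(k-1)(k+1)(k+2))) · v_j · v_{k-1-j}. Then v_k ≤ 1/2^{k+2} for all k ≥ 0. -/

import Mathlib

lemma aux_sum_icc (m : ℕ) : (∑ j ∈ Finset.Icc 1 m, (j:ℝ)) = m*(m+1)/2 := by
  induction m with
  | zero => simp
  | succ n ih =>
    rw [Finset.sum_Icc_succ_top (by omega), ih]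
    push_cast
    ring

theorem seq_bound (v : ℕ → ℝ) (hv : ∀ k, 0 ≤ v k)
    (h0 : v 0 ≤ 1 / 4) (h1 : v 1 ≤ 1 / 8) (h2 : v 2 ≤ 1 / 16)
    (hrec : ∀ k, 3 ≤ k →
      v k ≤ ∑ j ∈ Finset.Icc 1 (k - 1),
        (j : ℝ) * (4 * ((k : ℝ) ^ 2 - 3) /
          (((k : ℝ) - 2) * ((k : ℝ) - 1) * ((k : ℝ) + 1) * ((k : ℝ) + 2))) *
          v j * v (k - 1 - j)) :
    ∀ k, v k ≤ 1 / 2 ^ (k + 2) := by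
  intro k
  induction k using Nat.strong_induction_on with
  | _ k ih =>
  match k, ih with
  | 0, _ => norm_num; linarith
  | 1, _ => norm_num; linarith
  | 2, _ => norm_num; linarith
  | (n+3), ih =>
    set K := n + 3 with hK
    have hK3 : 3 ≤ K := by omega
    have hx : (3:ℝ) ≤ (K:ℝ) := by exact_mod_cast hK3
    set c : ℝ := 4 * ((K:ℝ)^2 - 3) /
        (((K:ℝ)-2)*((K:ℝ)-1)*((K:ℝ)+1)*((K:ℝ)+2)) with hc
    have hD : (0:ℝ) < ((K:ℝ)-2)*((K:ℝ)-1)*((K:ℝ)+1)*((K:ℝ)+2) :=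
      mul_pos (mul_pos (mul_pos (by linarith) (by linarith)) (by linarith)) (by linarith)
    have hcpos : 0 ≤ c := by
      apply div_nonneg (by nlinarith) (le_of_lt hD)
    have step1 := hrec K hK3
    have step2 : ∑ j ∈ Finset.Icc 1 (K-1), (j:ℝ) * c * v j * v (K-1-j)
        ≤ ∑ j ∈ Finset.Icc 1 (K-1), (j:ℝ) * (c * (1/2^(K+3))) := by
      apply Finset.sum_le_sum
      intro j hj
      obtain ⟨hj1, hj2⟩ := Finset.mem_Icc.mp hj
      have hvj := ih j (by omega)
      have hvj' := ih (K-1-j) (by omega)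
      have he : (j+2) + ((K-1-j)+2) = K + 3 := by omega
      have hprod : v j * v (K-1-j) ≤ 1/2^(K+3) := by
        calc v j * v (K-1-j) ≤ (1/2^(j+2)) * (1/2^((K-1-j)+2)) :=
              mul_le_mul hvj hvj' (hv _) (by positivity)
          _ = 1/2^(K+3) := by
              rw [div_mul_div_comm, one_mul, ← pow_add, he]
      calc (j:ℝ) * c * v j * v (K-1-j) = (j:ℝ) * c * (v j * v (K-1-j)) := by ring
        _ ≤ (j:ℝ) * c * (1/2^(K+3)) := by
            apply mul_le_mul_of_nonneg_left hprod (by positivity)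
        _ = (j:ℝ) * (c * (1/2^(K+3))) := by ring
    have hsum : (∑ j ∈ Finset.Icc 1 (K-1), (j:ℝ)) = ((K:ℝ)-1)*(K:ℝ)/2 := by
      have h := aux_sum_icc (n+2)
      have hKn : K - 1 = n + 2 := by omega
      rw [hKn, h, hK]
      push_cast
      ring
    have step3 : ∑ j ∈ Finset.Icc 1 (K-1), (j:ℝ) * (c * (1/2^(K+3)))
        = (((K:ℝ)-1)*(K:ℝ)/2) * (c * (1/2^(K+3))) := by
      rw [← Finset.sum_mul, hsum]
    have step4 : (((K:ℝ)-1)*(K:ℝ)/2) * (c * (1/2^(K+3))) ≤ 1/2^(K+2) := by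
      have hP : (0:ℝ) < 2^(K+2) := by positivity
      have h23 : (2:ℝ)^(K+3) = 2^(K+2) * 2 := by rw [pow_succ]
      have hA : (((K:ℝ)-1)*(K:ℝ)/2) * c ≤ 2 := by
        rw [hc, mul_comm, div_mul_eq_mul_div, div_le_iff₀ hD]
        nlinarith [sq_nonneg ((K:ℝ) - 3)]
      calc (((K:ℝ)-1)*(K:ℝ)/2) * (c * (1/2^(K+3)))
          = ((((K:ℝ)-1)*(K:ℝ)/2) * c) / 2^(K+3) := by ring
        _ ≤ 2 / 2^(K+3) := by
            apply div_le_div_of_nonneg_right hA (by positivity) |>.trans_eq rfl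
        _ = 1/2^(K+2) := by rw [h23]; field_simp
    calc v K ≤ _ := step1
      _ ≤ _ := step2
      _ = _ := step3
      _ ≤ _ := step4
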